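/- Let k be a field and I = (x_1,x_2) ∩ (x_2,x_3) ∩ (x_1,x_3) ⊆ k[x_1,x_2,x_3]. Then for every t ≥ 1: (x_1x_2)^{t}(x_2x_3)^{t}(x_1x_3)^{t} = (x_1x_2x_3)^{2t} lies in (x_1,x_2)^{4t} ∩ (x_2,x_3)^{4t} ∩ (x_1,x_3)^{4t} but does not lie in I^{3t+1}. -/

import Mathlib

open MvPolynomial

noncomputable abbrev Mdeg (k : Type*) [Field k] (d : ℕ) : Ideal (MvPolynomial (Fin 3) k) :=
  Ideal.span ((fun s : Fin 3 →₀ ℕ => monomial s (1 : k)) '' {s | d ≤ s.sum fun _ n => n})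

theorem sum_add_eq (s u : Fin 3 →₀ ℕ) :
    ((s + u).sum fun _ n => n) = (s.sum fun _ n => n) + (u.sum fun _ n => n) :=
  Finsupp.sum_add_index' (fun _ => rfl) (fun _ _ _ => rfl)

theorem Mdeg_mul (k : Type*) [Field k] (a b : ℕ) :
    Mdeg k a * Mdeg k b ≤ Mdeg k (a + b) := by
  rw [Mdeg, Mdeg, Ideal.span_mul_span, Ideal.span_le]
  intro x hx
  simp only [Set.mem_mul, Set.mem_iUnion, Set.mem_singleton_iff, Set.mem_image, Set.mem_setOf_eq] at hx
  obtain ⟨y, ⟨s, hs, rfl⟩, z, ⟨u, hu, rfl⟩, rfl⟩ := hx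
  simp only [monomial_mul, one_mul]
  exact Ideal.subset_span ⟨s + u, by rw [Set.mem_setOf_eq, sum_add_eq]; exact add_le_add hs hu, rfl⟩

theorem Mdeg_pow (k : Type*) [Field k] (n : ℕ) : (Mdeg k 2) ^ n ≤ Mdeg k (2 * n) := by
  induction n with
  | zero =>
    rw [pow_zero, Nat.mul_zero, Ideal.one_eq_top, top_le_iff, Ideal.eq_top_iff_one]
    exact Ideal.subset_span ⟨0, by simp, by simp⟩
  | succ n ih =>
    calc (Mdeg k 2) ^ (n+1) = (Mdeg k 2) ^ n * Mdeg k 2 := pow_succ _ _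
    _ ≤ Mdeg k (2*n) * Mdeg k 2 := Ideal.mul_mono_left ih
    _ ≤ Mdeg k (2*n + 2) := Mdeg_mul k _ _
    _ = Mdeg k (2*(n+1)) := by ring_nf

theorem stmt_8 (k : Type*) [Field k]
    (I : Ideal (MvPolynomial (Fin 3) k))
    (hI : I = Ideal.span {X 0, X 1} ⊓ Ideal.span {X 1, X 2} ⊓ Ideal.span {X 0, X 2})
    (t : ℕ) (ht : 1 ≤ t) :
    (X 0 * X 1 * X 2 : MvPolynomial (Fin 3) k) ^ (2 * t) ∈
        (Ideal.span {X 0, X 1}) ^ (4 * t) ⊓ (Ideal.span {X 1, X 2}) ^ (4 * t) ⊓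
          (Ideal.span {X 0, X 2}) ^ (4 * t) ∧
      (X 0 * X 1 * X 2 : MvPolynomial (Fin 3) k) ^ (2 * t) ∉ I ^ (3 * t + 1) := by
  classical
  constructor
  · have hX : ∀ (i j : Fin 3), X i ∈ (Ideal.span {X i, X j} : Ideal (MvPolynomial (Fin 3) k)) ∧
        X j ∈ (Ideal.span {X i, X j} : Ideal (MvPolynomial (Fin 3) k)) := fun i j =>
      ⟨Ideal.subset_span (by simp), Ideal.subset_span (by simp)⟩
    have key : ∀ (i j : Fin 3), X i ^ (2*t) * X j ^ (2*t) ∈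
        (Ideal.span {X i, X j} : Ideal (MvPolynomial (Fin 3) k)) ^ (4*t) := by
      intro i j
      have := Ideal.mul_mem_mul (Ideal.pow_mem_pow (hX i j).1 (2*t))
        (Ideal.pow_mem_pow (hX i j).2 (2*t))
      rwa [← pow_add, show 2*t + 2*t = 4*t by ring] at this
    refine ⟨⟨?_, ?_⟩, ?_⟩
    · have h := Ideal.mul_mem_right (X 2 ^ (2*t)) _ (key 0 1)
      rwa [show X 0 ^ (2*t) * X 1 ^ (2*t) * X 2 ^ (2*t)
        = (X 0 * X 1 * X 2 : MvPolynomial (Fin 3) k) ^ (2*t) by ring] at h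
    · have h := Ideal.mul_mem_right (X 0 ^ (2*t)) _ (key 1 2)
      rwa [show X 1 ^ (2*t) * X 2 ^ (2*t) * X 0 ^ (2*t)
        = (X 0 * X 1 * X 2 : MvPolynomial (Fin 3) k) ^ (2*t) by ring] at h
    · have h := Ideal.mul_mem_right (X 1 ^ (2*t)) _ (key 0 2)
      rwa [show X 0 ^ (2*t) * X 2 ^ (2*t) * X 1 ^ (2*t)
        = (X 0 * X 1 * X 2 : MvPolynomial (Fin 3) k) ^ (2*t) by ring] at h
  · have hp : (X 0 * X 1 * X 2 : MvPolynomial (Fin 3) k) ^ (2 * t)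
        = monomial (Finsupp.single 0 (2*t) + Finsupp.single 1 (2*t) + Finsupp.single 2 (2*t)) 1 := by
      rw [mul_pow, mul_pow, X_pow_eq_monomial, X_pow_eq_monomial, X_pow_eq_monomial,
        monomial_mul, monomial_mul, one_mul, one_mul]
    have hIM : I ≤ Mdeg k 2 := by
      intro f hf
      rw [hI, Ideal.mem_inf, Ideal.mem_inf] at hf
      obtain ⟨⟨h01, h12⟩, h02⟩ := hf
      rw [show ({X 0, X 1} : Set (MvPolynomial (Fin 3) k)) = X '' {0, 1} from (Set.image_pair _ _ _).symm,
        mem_ideal_span_X_image] at h01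
      rw [show ({X 1, X 2} : Set (MvPolynomial (Fin 3) k)) = X '' {1, 2} from (Set.image_pair _ _ _).symm,
        mem_ideal_span_X_image] at h12
      rw [show ({X 0, X 2} : Set (MvPolynomial (Fin 3) k)) = X '' {0, 2} from (Set.image_pair _ _ _).symm,
        mem_ideal_span_X_image] at h02
      rw [Mdeg, mem_ideal_span_monomial_image]
      intro m hm
      obtain ⟨i, hi, hine⟩ := h01 m hm
      obtain ⟨j, hj, hjne⟩ := h12 m hm
      obtain ⟨l, hl, hlne⟩ := h02 m hm
      have key : ∃ a b : Fin 3, a ≠ b ∧ m a ≠ 0 ∧ m b ≠ 0 := by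
        simp only [Set.mem_insert_iff, Set.mem_singleton_iff] at hi hj hl
        rcases hi with rfl | rfl
        · rcases hj with rfl | rfl
          · exact ⟨0, 1, by decide, hine, hjne⟩
          · exact ⟨0, 2, by decide, hine, hjne⟩
        · rcases hl with rfl | rfl
          · exact ⟨1, 0, by decide, hine, hlne⟩
          · exact ⟨1, 2, by decide, hine, hlne⟩
      obtain ⟨a, b, hab, ha, hb⟩ := key
      refine ⟨Finsupp.single a 1 + Finsupp.single b 1, ?_, ?_⟩
      · rw [Set.mem_setOf_eq, sum_add_eq, Finsupp.sum_single_index rfl, Finsupp.sum_single_index rfl]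
      · intro c
        simp only [Finsupp.add_apply, Finsupp.single_apply]
        rcases eq_or_ne a c with rfl | hac
        · simp [(hab).symm, Nat.one_le_iff_ne_zero.mpr ha]
        · rcases eq_or_ne b c with rfl | hbc
          · simp [hac, Nat.one_le_iff_ne_zero.mpr hb]
          · simp [hac, hbc]
    intro hmem
    have hmem2 : (X 0 * X 1 * X 2 : MvPolynomial (Fin 3) k) ^ (2 * t) ∈ Mdeg k (2 * (3*t+1)) :=
      Mdeg_pow k (3*t+1) (Ideal.pow_right_mono hIM (3*t+1) hmem)
    rw [Mdeg, mem_ideal_span_monomial_image, hp] at hmem2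
    set e := Finsupp.single (0 : Fin 3) (2*t) + Finsupp.single 1 (2*t) + Finsupp.single 2 (2*t) with he
    have hsupp : (monomial e (1:k)).support = {e} := by
      rw [support_monomial, if_neg one_ne_zero]
    obtain ⟨s, hs, hse⟩ := hmem2 e (by rw [hsupp]; exact Finset.mem_singleton_self e)
    rw [Set.mem_setOf_eq] at hs
    have h1 : (s.sum fun _ n => n) ≤ e.sum fun _ n => n := by
      rw [Finsupp.sum_fintype _ _ (fun _ => rfl), Finsupp.sum_fintype _ _ (fun _ => rfl)]
      exact Finset.sum_le_sum fun i _ => hse i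
    have h2 : (e.sum fun _ n => n) = 6 * t := by
      rw [he, sum_add_eq, sum_add_eq, Finsupp.sum_single_index rfl, Finsupp.sum_single_index rfl,
        Finsupp.sum_single_index rfl]
      ring
    omega
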